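/- Let H be a symmetric positive semidefinite M×M real matrix with kernel K = ker H, and let λ₁ > 0 be such that ⟨u, H u⟩ ≥ λ₁ ‖u‖₂² for every u in the orthogonal complement K^⊥ (i.e. λ₁ is a lower bound for the nonzero eigenvalues of H). Let K̄ be a linear subspace of ℝ^M and set C := ‖P_K ∘ (I − P_{K̄})‖_F, and assume C ≤ 1. Then for every unit vector v ∈ ℝ^M with P_{K̄} v = 0 one has ⟨v, H v⟩ ≥ (1 − C²) λ₁. -/

import Mathlib

open scoped RealInnerProductSpace BigOperators

/-- The Frobenius norm `√(tr(AᵀA))` of a linear map on Euclidean space,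
computed as `√(∑ i ‖A eᵢ‖²)` over the standard orthonormal basis. -/
noncomputable def frobNorm {M : ℕ}
    (A : EuclideanSpace ℝ (Fin M) →L[ℝ] EuclideanSpace ℝ (Fin M)) : ℝ :=
  Real.sqrt (∑ i : Fin M, ‖A (EuclideanSpace.basisFun (Fin M) ℝ i)‖ ^ 2)

lemma frob_bound {M : ℕ}
    (A : EuclideanSpace ℝ (Fin M) →L[ℝ] EuclideanSpace ℝ (Fin M))
    (x : EuclideanSpace ℝ (Fin M)) : ‖A x‖ ≤ frobNorm A * ‖x‖ := by
  set e := EuclideanSpace.basisFun (Fin M) ℝ with he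
  have hx : (∑ i, e.repr x i • e i) = x := e.sum_repr x
  have h1 : ‖A x‖ ≤ ∑ i, |e.repr x i| * ‖A (e i)‖ := by
    conv_lhs => rw [← hx]
    rw [map_sum]
    refine (norm_sum_le _ _).trans ?_
    apply Finset.sum_le_sum
    intro i _
    rw [map_smul, norm_smul, Real.norm_eq_abs]
  have h2 : (∑ i, |e.repr x i| * ‖A (e i)‖) ^ 2 ≤
      (∑ i, (e.repr x i) ^ 2) * (∑ i, ‖A (e i)‖ ^ 2) := by
    have := Finset.sum_mul_sq_le_sq_mul_sq Finset.univ
      (fun i => |e.repr x i|) (fun i => ‖A (e i)‖)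
    simpa [sq_abs] using this
  have hxs : (∑ i, (e.repr x i) ^ 2) = ‖x‖ ^ 2 := by
    have h3 : ‖e.repr x‖ = ‖x‖ := e.repr.norm_map x
    rw [← h3, EuclideanSpace.norm_eq, Real.sq_sqrt (by positivity)]
    simp [Real.norm_eq_abs, sq_abs]
  have hnn : 0 ≤ ∑ i, |e.repr x i| * ‖A (e i)‖ := by positivity
  have h4 : (∑ i, |e.repr x i| * ‖A (e i)‖) ≤ ‖x‖ * frobNorm A := by
    rw [← Real.sqrt_sq hnn]
    refine (Real.sqrt_le_sqrt (h2.trans_eq (by rw [hxs]))).trans ?_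
    rw [Real.sqrt_mul (by positivity), Real.sqrt_sq (norm_nonneg x), frobNorm]
  linarith [h1]

/-- If `H` is symmetric positive semidefinite with kernel `K`, `λ₁ > 0` is a lower
bound for its nonzero eigenvalues, and `C = ‖P_K ∘ (I − P_K̄)‖_F ≤ 1`, then every
unit vector `v` orthogonal to `K̄` satisfies `⟨v, H v⟩ ≥ (1 − C²) λ₁`. -/
theorem rayleigh_lower_bound_of_frobNorm (M : ℕ)
    (H : EuclideanSpace ℝ (Fin M) →L[ℝ] EuclideanSpace ℝ (Fin M))
    (hsym : ∀ x y, ⟪H x, y⟫ = ⟪x, H y⟫)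
    (hpsd : ∀ x, 0 ≤ ⟪x, H x⟫)
    (lam₁ : ℝ) (hlam : 0 < lam₁)
    (hlow : ∀ u ∈ (LinearMap.ker (H : EuclideanSpace ℝ (Fin M) →ₗ[ℝ] EuclideanSpace ℝ (Fin M)))ᗮ, lam₁ * ‖u‖ ^ 2 ≤ ⟪u, H u⟫)
    (Kbar : Submodule ℝ (EuclideanSpace ℝ (Fin M)))
    (C : ℝ)
    (hC : C = frobNorm (((LinearMap.ker (H : EuclideanSpace ℝ (Fin M) →ₗ[ℝ] EuclideanSpace ℝ (Fin M))).subtypeL.comp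
        (Submodule.orthogonalProjectionOnto (LinearMap.ker (H : EuclideanSpace ℝ (Fin M) →ₗ[ℝ] EuclideanSpace ℝ (Fin M))))).comp
      (ContinuousLinearMap.id ℝ (EuclideanSpace ℝ (Fin M))
        - Kbar.subtypeL.comp (Submodule.orthogonalProjectionOnto Kbar))))
    (hC1 : C ≤ 1)
    (v : EuclideanSpace ℝ (Fin M)) (hv : ‖v‖ = 1)
    (hvo : Kbar.subtypeL.comp (Submodule.orthogonalProjectionOnto Kbar) v = 0) :
    (1 - C ^ 2) * lam₁ ≤ ⟪v, H v⟫ := by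
  set K := LinearMap.ker (H : EuclideanSpace ℝ (Fin M) →ₗ[ℝ] EuclideanSpace ℝ (Fin M)) with hK
  set p : EuclideanSpace ℝ (Fin M) := (Submodule.orthogonalProjectionOnto K v : EuclideanSpace ℝ (Fin M))
    with hp
  set w : EuclideanSpace ℝ (Fin M) := v - p with hw
  -- p is in the kernel
  have hpK : p ∈ K := (Submodule.orthogonalProjectionOnto K v).2
  have hHp : H p = 0 := hpK
  -- w ∈ Kᗮ
  have hwK : w ∈ Kᗮ := K.sub_starProjection_mem_orthogonal v
  -- H v = H w
  have hHv : H v = H w := by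
    rw [hw, map_sub, hHp, sub_zero]
  -- inner products agree
  have hinner : ⟪v, H v⟫ = ⟪w, H w⟫ := by
    rw [hHv, ← hsym, hHv, real_inner_comm]
  -- orthogonality of p and w
  have hpw : ⟪p, w⟫ = 0 := hwK p hpK
  -- Pythagoras
  have hwp : ⟪w, p⟫ = 0 := by rw [real_inner_comm]; exact hpw
  have hpyth : ‖v‖ ^ 2 = ‖p‖ ^ 2 + ‖w‖ ^ 2 := by
    have : v = p + w := by rw [hw]; abel
    rw [this, ← real_inner_self_eq_norm_sq, ← real_inner_self_eq_norm_sq,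
      ← real_inner_self_eq_norm_sq, inner_add_add_self, hpw, hwp]
    ring
  -- bound on ‖p‖ using Frobenius norm
  have hpC : ‖p‖ ≤ C := by
    have hAv : (((LinearMap.ker (H : EuclideanSpace ℝ (Fin M) →ₗ[ℝ] EuclideanSpace ℝ (Fin M))).subtypeL.comp
        (Submodule.orthogonalProjectionOnto (LinearMap.ker (H : EuclideanSpace ℝ (Fin M) →ₗ[ℝ] EuclideanSpace ℝ (Fin M))))).comp
      (ContinuousLinearMap.id ℝ (EuclideanSpace ℝ (Fin M))
        - Kbar.subtypeL.comp (Submodule.orthogonalProjectionOnto Kbar))) v = p := by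
      simp [ContinuousLinearMap.comp_apply, ContinuousLinearMap.sub_apply, hvo, hp, hK]
    have := frob_bound (((LinearMap.ker (H : EuclideanSpace ℝ (Fin M) →ₗ[ℝ] EuclideanSpace ℝ (Fin M))).subtypeL.comp
        (Submodule.orthogonalProjectionOnto (LinearMap.ker (H : EuclideanSpace ℝ (Fin M) →ₗ[ℝ] EuclideanSpace ℝ (Fin M))))).comp
      (ContinuousLinearMap.id ℝ (EuclideanSpace ℝ (Fin M))
        - Kbar.subtypeL.comp (Submodule.orthogonalProjectionOnto Kbar))) v
    rw [hAv, hv, mul_one, ← hC] at this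
    exact this
  have hC0 : 0 ≤ C := le_trans (norm_nonneg p) hpC
  have hp2 : ‖p‖ ^ 2 ≤ C ^ 2 := by
    have := sq_le_sq' (by linarith [norm_nonneg p]) hpC
    simpa using this
  have hw2 : 1 - C ^ 2 ≤ ‖w‖ ^ 2 := by
    have : ‖v‖ ^ 2 = 1 := by rw [hv]; ring
    linarith
  have hl := hlow w hwK
  have : (1 - C ^ 2) * lam₁ ≤ lam₁ * ‖w‖ ^ 2 := by
    rw [mul_comm]
    exact mul_le_mul_of_nonneg_left hw2 hlam.le
  linarith [hinner ▸ hl]
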